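/- Let p be a prime and let G be a group of order p⁵ with |G'| = p and G/G' ≅ C_p × C_p × C_{p²}. Then the center Z(G) has order p³. -/

import Mathlib

open scoped commutatorElement

-- helper: proper divisibility among p-powers
lemma aux_dvd_mul {p n x y : ℕ} (hp : p.Prime) (hx : x ∣ y) (hy : y ∣ p ^ n)
    (hne : x ≠ y) : p * x ∣ y := by
  obtain ⟨a, ha, rfl⟩ := (Nat.dvd_prime_pow hp).mp (hx.trans hy)
  obtain ⟨b, hb, rfl⟩ := (Nat.dvd_prime_pow hp).mp hy
  have hab : a < b := by
    rcases lt_or_eq_of_le ((Nat.pow_dvd_pow_iff_le_right hp.one_lt).mp hx) with h | h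
    · exact h
    · exact absurd (by rw [h]) hne
  calc p * p ^ a = p ^ (a + 1) := by ring
  _ ∣ p ^ b := Nat.pow_dvd_pow _ hab


lemma comm_central {G : Type*} [Group G] (p : ℕ) (hp : p.Prime)
    (hG : Nat.card G = p ^ 5) (hG' : Nat.card (commutator G) = p) :
    commutator G ≤ Subgroup.center G := by
  have : Finite G := Nat.finite_of_card_ne_zero (by
    rw [hG]; exact pow_ne_zero _ hp.pos.ne')
  have : Fact p.Prime := ⟨hp⟩
  have hcyc : IsCyclic (commutator G) := isCyclic_of_prime_card hG'
  intro g hg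
  rw [Subgroup.mem_center_iff]
  intro x
  have h1 : MulAut.conjNormal (H := commutator G) x = 1 := by
    rw [← orderOf_eq_one_iff]
    have d1 : orderOf (MulAut.conjNormal (H := commutator G) x) ∣ p ^ 5 := by
      refine dvd_trans (orderOf_map_dvd _ x) ?_
      rw [← hG]; exact orderOf_dvd_natCard x
    have d2 : orderOf (MulAut.conjNormal (H := commutator G) x) ∣ p - 1 := by
      have := IsCyclic.card_mulAut (G := commutator G)
      rw [hG', Nat.totient_prime hp] at this
      rw [← this]; exact orderOf_dvd_natCard _
    have hcop : Nat.Coprime (p ^ 5) (p - 1) := by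
      apply Nat.Coprime.pow_left
      have h2 := (Nat.coprime_sub_self_left (m := p - 1) (n := p) (by omega))
      have h3 : p - (p - 1) = 1 := by have := hp.pos; omega
      rw [← h2, h3]; exact Nat.coprime_one_left _
    exact Nat.eq_one_of_dvd_coprimes hcop d1 d2
  have := congrArg (fun (f : MulAut (commutator G)) => ((f ⟨g, hg⟩ : commutator G) : G)) h1
  simp only [MulAut.conjNormal_apply, MulAut.one_apply] at this
  exact (mul_inv_eq_iff_eq_mul.mp this)

section
variable {G : Type*} [Group G]

lemma comm_mem (a b : G) : ⁅a, b⁆ ∈ commutator G := by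
  rw [commutator_def]
  exact Subgroup.commutator_mem_commutator (Subgroup.mem_top a) (Subgroup.mem_top b)

/-- the commutator-with-x map as a hom, assuming commutators are central -/
def commHom (hc : ∀ a b : G, ⁅a, b⁆ ∈ Subgroup.center G) (x : G) : G →* G :=
  MonoidHom.mk' (fun g => ⁅g, x⁆) (by
    intro a b
    show ⁅a * b, x⁆ = ⁅a, x⁆ * ⁅b, x⁆
    have h1 := Subgroup.mem_center_iff.mp (hc b x)
    calc ⁅a * b, x⁆ = a * ⁅b, x⁆ * (x * a⁻¹ * x⁻¹) := by
          simp only [commutatorElement_def]; group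
      _ = ⁅b, x⁆ * a * (x * a⁻¹ * x⁻¹) := by rw [h1 a]
      _ = ⁅b, x⁆ * ⁅a, x⁆ := by simp only [commutatorElement_def]; group
      _ = ⁅a, x⁆ * ⁅b, x⁆ := (h1 ⁅a, x⁆).symm)

lemma commHom_apply (hc : ∀ a b : G, ⁅a, b⁆ ∈ Subgroup.center G) (x g : G) :
    commHom hc x g = ⁅g, x⁆ := rfl

lemma cent_card (p : ℕ) (hp : p.Prime) (hG : Nat.card G = p ^ 5)
    (hG' : Nat.card (commutator G) = p)
    (hc : ∀ a b : G, ⁅a, b⁆ ∈ Subgroup.center G)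
    {x : G} (hx : x ∉ Subgroup.center G) :
    Nat.card (Subgroup.centralizer {x}) = p ^ 4 := by
  have hfin : Finite G := Nat.finite_of_card_ne_zero (by
    rw [hG]; exact pow_ne_zero _ hp.pos.ne')
  set φ := commHom hc x with hφ
  have hker : φ.ker = Subgroup.centralizer {x} := by
    ext g
    rw [MonoidHom.mem_ker, commHom_apply, commutatorElement_eq_one_iff_commute,
      Subgroup.mem_centralizer_iff]
    constructor
    · intro h z hz; rw [Set.mem_singleton_iff] at hz; subst hz; exact h.symm
    · intro h; exact (h x rfl).symm
  have hrle : φ.range ≤ commutator G := by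
    rintro - ⟨g, rfl⟩; exact comm_mem g x
  have hrdvd : Nat.card φ.range ∣ p := by
    rw [← hG']; exact Subgroup.card_dvd_of_le hrle
  have hrne : Nat.card φ.range ≠ 1 := by
    intro h1
    rw [Subgroup.card_eq_one] at h1
    apply hx
    rw [Subgroup.mem_center_iff]
    intro g
    have : φ g ∈ φ.range := ⟨g, rfl⟩
    rw [h1, Subgroup.mem_bot, commHom_apply, commutatorElement_eq_one_iff_commute] at this
    exact this.eq
  have hrcard : Nat.card φ.range = p := ((Nat.dvd_prime hp).mp hrdvd).resolve_left hrne
  have hq : Nat.card (G ⧸ φ.ker) = p := by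
    rw [Nat.card_congr (QuotientGroup.quotientKerEquivRange φ).toEquiv, hrcard]
  have := Subgroup.card_eq_card_quotient_mul_card_subgroup φ.ker
  rw [hq, hG, hker] at this
  have : p * p ^ 4 = p * Nat.card (Subgroup.centralizer {x}) := by
    rw [← this]; ring
  exact (Nat.eq_of_mul_eq_mul_left hp.pos this).symm

end

theorem stmt14 {G : Type*} [Group G] (p : ℕ) (hp : p.Prime)
    (hG : Nat.card G = p ^ 5) (hG' : Nat.card (commutator G) = p)
    (hiso : Nonempty ((G ⧸ commutator G) ≃*
      Multiplicative (ZMod p × ZMod p × ZMod (p ^ 2)))) :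
    Nat.card (Subgroup.center G) = p ^ 3 := by
  have hfin : Finite G := Nat.finite_of_card_ne_zero (by
    rw [hG]; exact pow_ne_zero _ hp.pos.ne')
  have hfact : Fact p.Prime := ⟨hp⟩
  have hc : ∀ a b : G, ⁅a, b⁆ ∈ Subgroup.center G := fun a b =>
    comm_central p hp hG hG' (comm_mem a b)
  -- G is not commutative
  have hnc : ¬ (∀ a b : G, a * b = b * a) := by
    intro hab
    have hbot : commutator G ≤ ⊥ := by
      rw [commutator_eq_closure]
      apply (Subgroup.closure_le _).mpr
      rintro g ⟨a, b, rfl⟩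
      rw [SetLike.mem_coe, Subgroup.mem_bot]
      exact commutatorElement_eq_one_iff_commute.mpr (hab a b)
    have : Nat.card (commutator G) = 1 := by
      rw [Subgroup.card_eq_one, eq_bot_iff]; exact hbot
    rw [hG'] at this
    exact hp.one_lt.ne' this
  -- p-th powers are central
  have hpow : ∀ x : G, x ^ p ∈ Subgroup.center G := by
    intro x
    rw [Subgroup.mem_center_iff]
    intro g
    have h1 : ⁅x ^ p, g⁆ = 1 := by
      have h2 : ⁅x ^ p, g⁆ = ⁅x, g⁆ ^ p := map_pow (commHom hc g) x p
      have ho : orderOf ⁅x, g⁆ ∣ p := by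
        have := Subgroup.orderOf_dvd_natCard (commutator G) (comm_mem x g)
        rwa [hG'] at this
      rw [h2]
      exact orderOf_dvd_iff_pow_eq_one.mp ho
    exact ((commutatorElement_eq_one_iff_commute.mp h1).symm).eq
  -- an element whose p-th power is not in the commutator subgroup
  obtain ⟨e⟩ := hiso
  have hp2 : ((p : ZMod (p ^ 2)) ≠ 0) := by
    rw [Ne, ZMod.natCast_eq_zero_iff]
    intro hdvd
    have h1 := Nat.le_of_dvd hp.pos hdvd
    nlinarith [hp.two_le]
  set t : Multiplicative (ZMod p × ZMod p × ZMod (p ^ 2)) :=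
    Multiplicative.ofAdd (0, 0, 1) with htdef
  have ht : t ^ p ≠ 1 := by
    intro h
    apply hp2
    have h2 := congrArg Multiplicative.toAdd h
    simp only [toAdd_pow, htdef, toAdd_ofAdd, toAdd_one, smul_zero, Prod.smul_mk,
      Prod.mk_eq_zero, nsmul_eq_mul, mul_one] at h2
    exact h2.2.2
  obtain ⟨x, hx⟩ := QuotientGroup.mk'_surjective (commutator G) (e.symm t)
  have hxp : x ^ p ∉ commutator G := by
    intro hmem
    have h1 : ((QuotientGroup.mk' (commutator G)) x) ^ p = 1 := by
      rw [← map_pow]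
      exact (QuotientGroup.eq_one_iff _).mpr hmem
    rw [hx] at h1
    apply ht
    have h2 := congrArg e h1
    rwa [map_pow, e.apply_symm_apply, map_one] at h2
  set Z := Subgroup.center G with hZdef
  have hZdvd : Nat.card Z ∣ p ^ 5 := by
    rw [← hG]; exact Subgroup.card_subgroup_dvd_card Z
  set S := commutator G ⊔ Subgroup.closure {x ^ p} with hSdef
  have hSle : S ≤ Z := sup_le (comm_central p hp hG hG')
    ((Subgroup.closure_le _).mpr (by
      intro g hg; rw [Set.mem_singleton_iff] at hg; subst hg; exact hpow x))
  have hxpS : x ^ p ∈ S := Subgroup.mem_sup_right (Subgroup.subset_closure rfl)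
  have hSne : Nat.card S ≠ p := by
    intro hcard
    have h1 : commutator G = S :=
      Subgroup.eq_of_le_of_card_ge le_sup_left (by rw [hcard, hG'])
    rw [← h1] at hxpS
    exact hxp hxpS
  have hSdvd5 : Nat.card S ∣ p ^ 5 := (Subgroup.card_dvd_of_le hSle).trans hZdvd
  have hp2S : p ^ 2 ∣ Nat.card S := by
    have h1 := aux_dvd_mul hp (Subgroup.card_dvd_of_le (le_sup_left :
      commutator G ≤ S)) hSdvd5 (by rw [hG']; exact fun h => hSne h.symm)
    rw [hG'] at h1
    rwa [pow_two]
  have hp2Z : p ^ 2 ∣ Nat.card Z := hp2S.trans (Subgroup.card_dvd_of_le hSle)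
  obtain ⟨k, hk5, hkZ⟩ := (Nat.dvd_prime_pow hp).mp hZdvd
  have hk2 : 2 ≤ k := by
    by_contra hlt
    push_neg at hlt
    have h1 : p ^ 2 ∣ p ^ k := hkZ ▸ hp2Z
    have := (Nat.pow_dvd_pow_iff_le_right hp.one_lt).mp h1
    omega
  -- exclude k = 5
  have hk5' : k ≠ 5 := by
    intro h
    apply hnc
    intro a b
    have hZtop : Z = ⊤ := Subgroup.eq_top_of_card_eq (H := Z) (by rw [hkZ, h, hG])
    have : a ∈ Z := hZtop ▸ Subgroup.mem_top a
    exact (Subgroup.mem_center_iff.mp this b).symm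
  -- exclude k = 4
  have hk4' : k ≠ 4 := by
    intro h
    have hq : Nat.card (G ⧸ Z) = p := by
      have h1 := Subgroup.card_eq_card_quotient_mul_card_subgroup Z
      rw [hG, hkZ, h] at h1
      rw [mul_comm] at h1
      have h2 : p ^ 4 * p = p ^ 4 * Nat.card (G ⧸ Z) := by rw [← h1]; ring
      exact (Nat.eq_of_mul_eq_mul_left (pow_pos hp.pos 4) h2).symm
    haveI : IsCyclic (G ⧸ Z) := isCyclic_of_prime_card hq
    letI cg := commGroupOfCyclicCenterQuotient (QuotientGroup.mk' Z)
      (by rw [QuotientGroup.ker_mk'])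
    exact hnc fun a b => cg.mul_comm a b
  -- exclude k = 2
  have hk2' : k ≠ 2 := by
    intro hke
    have hkZ2 : Nat.card Z = p ^ 2 := by rw [hkZ, hke]
    obtain ⟨a, ha⟩ : ∃ a : G, a ∉ Z := by
      by_contra h; push_neg at h
      apply hnc
      intro u v
      exact (Subgroup.mem_center_iff.mp (h u) v).symm
    obtain ⟨b, hb⟩ : ∃ b, b * a ≠ a * b := by
      by_contra h; push_neg at h
      exact ha (Subgroup.mem_center_iff.mpr h)
    have hbZ : b ∉ Z := fun h => hb (Subgroup.mem_center_iff.mp h a).symm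
    set Ca := Subgroup.centralizer {a} with hCadef
    set Cb := Subgroup.centralizer {b} with hCbdef
    have hCa : Nat.card Ca = p ^ 4 := cent_card p hp hG hG' hc ha
    have hCb : Nat.card Cb = p ^ 4 := cent_card p hp hG hG' hc hbZ
    have haCa : a ∈ Ca := by
      rw [hCadef, Subgroup.mem_centralizer_iff]
      rintro z hz; rw [Set.mem_singleton_iff] at hz; subst hz; rfl
    have hbCb : b ∈ Cb := by
      rw [hCbdef, Subgroup.mem_centralizer_iff]
      rintro z hz; rw [Set.mem_singleton_iff] at hz; subst hz; rfl
    have hbCa : b ∉ Ca := by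
      rw [hCadef, Subgroup.mem_centralizer_iff]
      intro h
      exact hb (h a rfl).symm
    have haCb : a ∉ Cb := by
      rw [hCbdef, Subgroup.mem_centralizer_iff]
      intro h
      exact hb (h b rfl)
    set H := Ca ⊓ Cb with hHdef
    have hCaidx : Ca.index = p := by
      have h1 := Subgroup.card_mul_index Ca
      rw [hCa, hG] at h1
      have h2 : p ^ 4 * Ca.index = p ^ 4 * p := by rw [h1]; ring
      exact Nat.eq_of_mul_eq_mul_left (pow_pos hp.pos 4) h2
    have hCbidx : Cb.index = p := by
      have h1 := Subgroup.card_mul_index Cb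
      rw [hCb, hG] at h1
      have h2 : p ^ 4 * Cb.index = p ^ 4 * p := by rw [h1]; ring
      exact Nat.eq_of_mul_eq_mul_left (pow_pos hp.pos 4) h2
    have hHidx : H.index ≤ p ^ 2 := by
      have h1 := Subgroup.index_inf_le (H := Ca) (K := Cb)
      rw [hCaidx, hCbidx] at h1
      rwa [pow_two]
    have hHcard_ge : p ^ 3 ≤ Nat.card H := by
      have h1 := Subgroup.card_mul_index H
      rw [hG] at h1
      by_contra hlt
      push_neg at hlt
      have h2 : p ^ 5 ≤ Nat.card H * p ^ 2 := h1 ▸ Nat.mul_le_mul_left _ hHidx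
      have h3 : Nat.card H * p ^ 2 < p ^ 3 * p ^ 2 :=
        (Nat.mul_lt_mul_right (pow_pos hp.pos 2)).mpr hlt
      have h4 : p ^ 3 * p ^ 2 = p ^ 5 := by ring
      omega
    have hHdvd : Nat.card H ∣ p ^ 4 := by
      rw [← hCa]; exact Subgroup.card_dvd_of_le inf_le_left
    have hHne : Nat.card H ≠ p ^ 4 := by
      intro h
      have h1 : H = Ca := Subgroup.eq_of_le_of_card_ge inf_le_left (by rw [h, hCa])
      have h2 : a ∈ H := by rw [h1]; exact haCa
      exact haCb (Subgroup.mem_inf.mp h2).2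
    have hHcard : Nat.card H = p ^ 3 := by
      obtain ⟨j, hj4, hjc⟩ := (Nat.dvd_prime_pow hp).mp hHdvd
      have hj3 : 3 ≤ j := by
        by_contra hcon; push_neg at hcon
        have : p ^ j < p ^ 3 := Nat.pow_lt_pow_right hp.one_lt (by omega)
        omega
      have hjne : j ≠ 4 := fun h => hHne (by rw [hjc, h])
      have : j = 3 := by omega
      rw [hjc, this]
    have hZH : Z ≤ H := le_inf (Subgroup.center_le_centralizer _)
      (Subgroup.center_le_centralizer _)
    obtain ⟨h0, hh0H, hh0Z⟩ : ∃ g, g ∈ H ∧ g ∉ Z := by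
      by_contra hcon; push_neg at hcon
      have h1 : H ≤ Z := hcon
      have h2 := Subgroup.card_dvd_of_le h1
      rw [hHcard, hkZ2] at h2
      have := (Nat.pow_dvd_pow_iff_le_right hp.one_lt).mp h2
      omega
    set K := Z ⊔ Subgroup.closure {h0} with hKdef
    have hKH : K ≤ H := sup_le hZH ((Subgroup.closure_le _).mpr (by
      intro g hg; rw [Set.mem_singleton_iff] at hg; subst hg; exact hh0H))
    have hh0K : h0 ∈ K := Subgroup.mem_sup_right (Subgroup.subset_closure rfl)
    have hKne : Nat.card Z ≠ Nat.card K := by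
      intro hcc
      have h1 : Z = K := Subgroup.eq_of_le_of_card_ge le_sup_left (le_of_eq hcc.symm)
      rw [← h1] at hh0K
      exact hh0Z hh0K
    have hKdvd5 : Nat.card K ∣ p ^ 5 := by
      rw [← hG]; exact Subgroup.card_subgroup_dvd_card K
    have hKcard : Nat.card K = p ^ 3 := by
      apply Nat.dvd_antisymm
      · rw [← hHcard]; exact Subgroup.card_dvd_of_le hKH
      · have h1 := aux_dvd_mul hp (Subgroup.card_dvd_of_le (le_sup_left : Z ≤ K))
          hKdvd5 hKne
        rw [hkZ2] at h1
        have h2 : p * p ^ 2 = p ^ 3 := by ring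
        rwa [h2] at h1
    have hKH' : K = H := Subgroup.eq_of_le_of_card_ge hKH (by rw [hKcard, hHcard])
    -- M = H ⊔ closure {a} = Ca
    set M := H ⊔ Subgroup.closure {a} with hMdef
    have hMCa : M ≤ Ca := sup_le inf_le_left ((Subgroup.closure_le _).mpr (by
      intro g hg; rw [Set.mem_singleton_iff] at hg; subst hg; exact haCa))
    have haM : a ∈ M := Subgroup.mem_sup_right (Subgroup.subset_closure rfl)
    have haH : a ∉ H := fun h => haCb (Subgroup.mem_inf.mp h).2
    have hMne : Nat.card H ≠ Nat.card M := by
      intro hcc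
      have h1 : H = M := Subgroup.eq_of_le_of_card_ge le_sup_left (le_of_eq hcc.symm)
      rw [← h1] at haM
      exact haH haM
    have hMdvd5 : Nat.card M ∣ p ^ 5 := by
      rw [← hG]; exact Subgroup.card_subgroup_dvd_card M
    have hMcard : Nat.card M = p ^ 4 := by
      apply Nat.dvd_antisymm
      · rw [← hCa]; exact Subgroup.card_dvd_of_le hMCa
      · have h1 := aux_dvd_mul hp (Subgroup.card_dvd_of_le (le_sup_left : H ≤ M))
          hMdvd5 hMne
        rw [hHcard] at h1
        have h2 : p * p ^ 3 = p ^ 4 := by ring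
        rwa [h2] at h1
    have hMCa' : M = Ca := Subgroup.eq_of_le_of_card_ge hMCa (by rw [hMcard, hCa])
    -- N = Ca ⊔ closure {b} = ⊤
    set N := Ca ⊔ Subgroup.closure {b} with hNdef
    have hbN : b ∈ N := Subgroup.mem_sup_right (Subgroup.subset_closure rfl)
    have hNne : Nat.card Ca ≠ Nat.card N := by
      intro hcc
      have h1 : Ca = N := Subgroup.eq_of_le_of_card_ge le_sup_left (le_of_eq hcc.symm)
      rw [← h1] at hbN
      exact hbCa hbN
    have hNdvd5 : Nat.card N ∣ p ^ 5 := by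
      rw [← hG]; exact Subgroup.card_subgroup_dvd_card N
    have hNcard : Nat.card N = p ^ 5 := by
      apply Nat.dvd_antisymm hNdvd5
      have h1 := aux_dvd_mul hp (Subgroup.card_dvd_of_le (le_sup_left : Ca ≤ N))
        hNdvd5 hNne
      rw [hCa] at h1
      have h2 : p * p ^ 4 = p ^ 5 := by ring
      rwa [h2] at h1
    have hNtop : N = ⊤ := Subgroup.eq_top_of_card_eq (H := N) (by rw [hNcard, hG])
    -- conclude h0 is central: contradiction
    apply hh0Z
    rw [hZdef, Subgroup.mem_center_iff]
    intro g
    have hsub : (⊤ : Subgroup G) ≤ Subgroup.centralizer {h0} := by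
      rw [← hNtop]
      apply sup_le
      · rw [← hMCa']
        apply sup_le
        · rw [← hKH']
          apply sup_le
          · exact Subgroup.center_le_centralizer _
          · apply (Subgroup.closure_le _).mpr
            intro z hz; rw [Set.mem_singleton_iff] at hz; rw [hz]
            rw [SetLike.mem_coe, Subgroup.mem_centralizer_iff]
            intro w hw; rw [Set.mem_singleton_iff] at hw; rw [hw]
        · apply (Subgroup.closure_le _).mpr
          intro z hz; rw [Set.mem_singleton_iff] at hz; rw [hz]
          rw [SetLike.mem_coe, Subgroup.mem_centralizer_iff]
          intro w hw; rw [Set.mem_singleton_iff] at hw; rw [hw]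
          have := (Subgroup.mem_inf.mp hh0H).1
          rw [Subgroup.mem_centralizer_iff] at this
          exact (this a rfl).symm
      · apply (Subgroup.closure_le _).mpr
        intro z hz; rw [Set.mem_singleton_iff] at hz; rw [hz]
        rw [SetLike.mem_coe, Subgroup.mem_centralizer_iff]
        intro w hw; rw [Set.mem_singleton_iff] at hw; rw [hw]
        have := (Subgroup.mem_inf.mp hh0H).2
        rw [Subgroup.mem_centralizer_iff] at this
        exact (this b rfl).symm
    have hg := hsub (Subgroup.mem_top g)
    rw [Subgroup.mem_centralizer_iff] at hg
    exact (hg h0 rfl).symm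
  have hk3 : k = 3 := by omega
  rw [hkZ, hk3]
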